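/- For b ≤ 0 let N(b) denote the unique positive solution of N·I(b,N) = 1. Then the function g(b) := −∂_N I(b, N(b)) / I(b, N(b))² (which equals the derivative of N ↦ 1/I(b,N) evaluated at N(b)) is strictly increasing on (−∞, 0]: if b₁ < b₂ ≤ 0 then g(b₁) < g(b₂). -/

import Mathlib

open MeasureTheory Real Filter Set Topology

/-- The function `I(b,N)` from the NNLIF model, with explicit dependence on the
connectivity parameter `b`. -/
noncomputable def Ifun (V_R V_F b N : ℝ) : ℝ :=
  ∫ v in Set.Iic V_F,
    Real.exp (-(v - b * N) ^ 2 / 2) * ∫ w in (max v V_R)..V_F, Real.exp ((w - b * N) ^ 2 / 2)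


noncomputable def Psi (t : ℝ) : ℝ := ∫ s in Set.Iic t, Real.exp (-s ^ 2 / 2)
noncomputable def psi (t : ℝ) : ℝ := Real.exp (t ^ 2 / 2) * Psi t

lemma gauss_integrable : Integrable (fun s : ℝ => Real.exp (-s ^ 2 / 2)) := by
  have : (fun s : ℝ => Real.exp (-s ^ 2 / 2)) = fun s : ℝ => Real.exp (-(1/2 : ℝ) * s ^ 2) := by
    funext s; ring_nf
  rw [this]
  exact integrable_exp_neg_mul_sq (by norm_num)

lemma gauss_cont : Continuous (fun s : ℝ => Real.exp (-s ^ 2 / 2)) := by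
  continuity

lemma Psi_pos (t : ℝ) : 0 < Psi t := by
  rw [Psi, setIntegral_pos_iff_support_of_nonneg_ae]
  · have : Function.support (fun s : ℝ => Real.exp (-s ^ 2 / 2)) = Set.univ := by
      ext s; simp [Real.exp_ne_zero]
    rw [this, Set.univ_inter]
    simp
  · filter_upwards with s using (Real.exp_pos _).le
  · exact gauss_integrable.integrableOn

lemma hasDerivAt_Psi (t : ℝ) : HasDerivAt Psi (Real.exp (-t ^ 2 / 2)) t := by
  have key : ∀ u : ℝ, Psi u = Psi 0 + ∫ s in (0:ℝ)..u, Real.exp (-s ^ 2 / 2) := by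
    intro u
    rw [← intervalIntegral.integral_Iic_sub_Iic gauss_integrable.integrableOn
      gauss_integrable.integrableOn]
    simp [Psi]
  have : HasDerivAt (fun u => Psi 0 + ∫ s in (0:ℝ)..u, Real.exp (-s ^ 2 / 2))
      (Real.exp (-t ^ 2 / 2)) t := by
    refine HasDerivAt.const_add _ ?_
    exact intervalIntegral.integral_hasDerivAt_right
      (gauss_cont.intervalIntegrable _ _)
      (gauss_cont.stronglyMeasurableAtFilter _ _) gauss_cont.continuousAt
  exact this.congr_of_eventuallyEq (by filter_upwards with u using (key u))

lemma Psi_cont : Continuous Psi := by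
  have : Differentiable ℝ Psi := fun t => (hasDerivAt_Psi t).differentiableAt
  exact this.continuous

lemma integral_id_gauss (t : ℝ) :
    ∫ s in Set.Iic t, s * Real.exp (-s ^ 2 / 2) = -Real.exp (-t ^ 2 / 2) := by
  have hderiv : ∀ x ∈ Set.Iic t, HasDerivAt (fun s : ℝ => -Real.exp (-s ^ 2 / 2))
      (x * Real.exp (-x ^ 2 / 2)) x := by
    intro x _
    have h1 : HasDerivAt (fun s : ℝ => -s ^ 2 / 2) (-x) x := by
      have : HasDerivAt (fun s : ℝ => s ^ 2) (2 * x) x := by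
        simpa using (hasDerivAt_pow 2 x)
      exact (this.neg.div_const 2).congr_deriv (by ring)
    have := (h1.exp).neg
    exact this.congr_deriv (by ring)
  have hint : IntegrableOn (fun s : ℝ => s * Real.exp (-s ^ 2 / 2)) (Set.Iic t) := by
    have : Integrable (fun s : ℝ => s * Real.exp (-(1/2 : ℝ) * s ^ 2)) :=
      integrable_mul_exp_neg_mul_sq (by norm_num)
    have h2 : (fun s : ℝ => s * Real.exp (-s ^ 2 / 2))
        = fun s : ℝ => s * Real.exp (-(1/2 : ℝ) * s ^ 2) := by
      funext s; ring_nf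
    rw [h2]; exact this.integrableOn
  have hlim : Tendsto (fun s : ℝ => -Real.exp (-s ^ 2 / 2)) atBot (𝓝 0) := by
    rw [← neg_zero]
    refine Tendsto.neg ?_
    refine Real.tendsto_exp_atBot.comp ?_
    have h1 : Tendsto (fun s : ℝ => s ^ 2) atBot atTop := by
      have ha : Tendsto (fun s : ℝ => -s) atBot atTop := tendsto_neg_atBot_atTop
      have hb : Tendsto (fun y : ℝ => y ^ 2) atTop atTop :=
        tendsto_pow_atTop (by norm_num)
      have hc := hb.comp ha
      refine hc.congr ?_
      intro s; simp
    have h2 : Tendsto (fun s : ℝ => -(s ^ 2)) atBot atBot := tendsto_neg_atTop_atBot.comp h1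
    refine Tendsto.atBot_div_const (by norm_num) h2
  have := MeasureTheory.integral_Iic_of_hasDerivAt_of_tendsto' hderiv hint hlim
  rw [this]; ring

lemma Psi_def (t : ℝ) : Psi t = ∫ s in Set.Iic t, Real.exp (-s ^ 2 / 2) := rfl


/-- strict Mills upper bound -/
lemma Psi_lt {t : ℝ} (ht : t < 0) : Psi t < Real.exp (-t ^ 2 / 2) / (-t) := by
  have hint1 : IntegrableOn (fun s : ℝ => s / t * Real.exp (-s ^ 2 / 2)) (Set.Iic t) := by
    have : Integrable (fun s : ℝ => s * Real.exp (-(1/2 : ℝ) * s ^ 2)) :=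
      integrable_mul_exp_neg_mul_sq (by norm_num)
    have h2 : (fun s : ℝ => s / t * Real.exp (-s ^ 2 / 2))
        = fun s : ℝ => (1/t) * (s * Real.exp (-(1/2 : ℝ) * s ^ 2)) := by
      funext s; rw [show -(1/2:ℝ) * s ^ 2 = -s ^ 2 / 2 by ring]; ring
    rw [h2]; exact (this.const_mul _).integrableOn
  have hint2 : IntegrableOn (fun s : ℝ => Real.exp (-s ^ 2 / 2)) (Set.Iic t) :=
    gauss_integrable.integrableOn
  have key : 0 < ∫ s in Set.Iic t, (s / t * Real.exp (-s ^ 2 / 2) - Real.exp (-s ^ 2 / 2)) := by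
    rw [setIntegral_pos_iff_support_of_nonneg_ae]
    · refine lt_of_lt_of_le ?_ (measure_mono (?_ : Set.Iio t ⊆ _))
      · simp [ht]
      · intro s hs
        simp only [Set.mem_Iio] at hs
        constructor
        · simp only [Function.mem_support]
          have h1 : (1:ℝ) < s / t := by
            rw [lt_div_iff_of_neg ht]; linarith
          have := Real.exp_pos (-s ^ 2 / 2)
          nlinarith
        · exact le_of_lt hs
    · rw [EventuallyLE, ae_restrict_iff' measurableSet_Iic]
      filter_upwards with s hs
      simp only [Set.mem_Iic] at hs
      have h1 : (1:ℝ) ≤ s / t := by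
        rw [le_div_iff_of_neg ht]; linarith
      have := Real.exp_pos (-s ^ 2 / 2)
      simp only [Pi.zero_apply]
      nlinarith
    · exact hint1.sub hint2
  have heq : ∫ s in Set.Iic t, (s / t * Real.exp (-s ^ 2 / 2) - Real.exp (-s ^ 2 / 2))
      = -Real.exp (-t ^ 2 / 2) / t - Psi t := by
    rw [integral_sub hint1 hint2, Psi_def]
    congr 1
    have : (fun s : ℝ => s / t * Real.exp (-s ^ 2 / 2))
        = fun s : ℝ => (1/t) * (s * Real.exp (-s ^ 2 / 2)) := by funext s; ring
    rw [this, integral_const_mul, integral_id_gauss]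
    ring
  rw [heq] at key
  have : -Real.exp (-t ^ 2 / 2) / t = Real.exp (-t ^ 2 / 2) / (-t) := by ring
  linarith [this ▸ key]

lemma psi_pos (t : ℝ) : 0 < psi t := mul_pos (Real.exp_pos _) (Psi_pos t)

lemma hasDerivAt_psi (t : ℝ) : HasDerivAt psi (t * psi t + 1) t := by
  have h1 : HasDerivAt (fun s : ℝ => Real.exp (s ^ 2 / 2)) (t * Real.exp (t ^ 2 / 2)) t := by
    have h0 : HasDerivAt (fun s : ℝ => s ^ 2 / 2) t t := by
      have : HasDerivAt (fun s : ℝ => s ^ 2) (2 * t) t := by simpa using hasDerivAt_pow 2 t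
      exact (this.div_const 2).congr_deriv (by ring)
    have := h0.exp
    convert this using 1; ring
  have := h1.mul (hasDerivAt_Psi t)
  have heq : t * Real.exp (t ^ 2 / 2) * Psi t
      + Real.exp (t ^ 2 / 2) * Real.exp (-t ^ 2 / 2) = t * psi t + 1 := by
    rw [← Real.exp_add, show t ^ 2 / 2 + -t ^ 2 / 2 = 0 by ring, Real.exp_zero]
    simp only [psi]; ring
  rw [heq] at this
  exact this

lemma psi_deriv_pos (t : ℝ) : 0 < t * psi t + 1 := by
  rcases le_or_gt 0 t with h | h
  · have := psi_pos t
    nlinarith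
  · have hb := Psi_lt h
    have h1 : psi t < Real.exp (t ^ 2 / 2) * (Real.exp (-t ^ 2 / 2) / (-t)) := by
      rw [psi]
      exact (mul_lt_mul_iff_right₀ (Real.exp_pos _)).2 hb
    have hexp : Real.exp (t ^ 2 / 2) * (Real.exp (-t ^ 2 / 2) / -t) = 1 / -t := by
      rw [mul_div_assoc', ← Real.exp_add, show t ^ 2 / 2 + -t ^ 2 / 2 = 0 by ring,
        Real.exp_zero]
    have h2 : psi t < 1 / (-t) := hexp ▸ h1
    have h3 : 0 < psi t := psi_pos t
    have h4 : psi t * (-t) < 1 := by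
      rw [div_eq_mul_inv, one_mul] at h2
      calc psi t * (-t) < (-t)⁻¹ * (-t) := by
            apply mul_lt_mul_of_pos_right h2 (by linarith)
        _ = 1 := inv_mul_cancel₀ (ne_of_gt (by linarith : (0:ℝ) < -t))
    nlinarith

lemma psi_strictMono : StrictMono psi := by
  have : ∀ t, 0 < deriv psi t := by
    intro t; rw [(hasDerivAt_psi t).deriv]; exact psi_deriv_pos t
  exact strictMono_of_deriv_pos this

/-- Mills lower bound: `exp(-t²/2)·(t+√(t²+4))/2 ≤ Psi t`, i.e. `psi t ≥ (t+√(t²+4))/2`. -/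
lemma mills_lower (t : ℝ) : (t + Real.sqrt (t ^ 2 + 4)) / 2 ≤ psi t := by
  set D : ℝ → ℝ := fun u => Psi u - Real.exp (-u ^ 2 / 2) * ((u + Real.sqrt (u ^ 2 + 4)) / 2)
    with hD
  have hsq : ∀ u : ℝ, (0:ℝ) < u ^ 2 + 4 := fun u => by positivity
  have hsqrt_pos : ∀ u : ℝ, 0 < Real.sqrt (u ^ 2 + 4) := fun u => Real.sqrt_pos.2 (hsq u)
  have hsqrt_sq : ∀ u : ℝ, Real.sqrt (u ^ 2 + 4) ^ 2 = u ^ 2 + 4 :=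
    fun u => Real.sq_sqrt (hsq u).le
  have hsqrt_gt : ∀ u : ℝ, -u < Real.sqrt (u ^ 2 + 4) := by
    intro u
    rcases le_or_gt (-u) 0 with h | h
    · exact lt_of_le_of_lt h (hsqrt_pos u)
    · nlinarith [hsqrt_sq u, hsqrt_pos u]
  -- derivative of D
  have hDderiv : ∀ u : ℝ, HasDerivAt D
      (Real.exp (-u ^ 2 / 2) * (1 - ((1 + u / Real.sqrt (u ^ 2 + 4)) / 2
        - u * ((u + Real.sqrt (u ^ 2 + 4)) / 2)))) u := by
    intro u
    have hexp : HasDerivAt (fun s : ℝ => Real.exp (-s ^ 2 / 2))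
        (-u * Real.exp (-u ^ 2 / 2)) u := by
      have h0 : HasDerivAt (fun s : ℝ => -s ^ 2 / 2) (-u) u := by
        have : HasDerivAt (fun s : ℝ => s ^ 2) (2 * u) u := by simpa using hasDerivAt_pow 2 u
        exact (this.neg.div_const 2).congr_deriv (by ring)
      have := h0.exp
      convert this using 1; ring
    have hsqrtD : HasDerivAt (fun s : ℝ => Real.sqrt (s ^ 2 + 4))
        (u / Real.sqrt (u ^ 2 + 4)) u := by
      have hin : HasDerivAt (fun s : ℝ => s ^ 2 + 4) (2 * u) u := by
        simpa using (hasDerivAt_pow 2 u).add_const 4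
      have := (Real.hasDerivAt_sqrt (hsq u).ne').comp u hin
      refine this.congr_deriv ?_
      field_simp
    have hh : HasDerivAt (fun s : ℝ => (s + Real.sqrt (s ^ 2 + 4)) / 2)
        ((1 + u / Real.sqrt (u ^ 2 + 4)) / 2) u :=
      ((hasDerivAt_id u).add hsqrtD).div_const 2
    have hB := hexp.mul hh
    have := (hasDerivAt_Psi u).sub hB
    refine this.congr_deriv ?_
    ring
  -- the derivative is nonneg
  have hderiv_nonneg : ∀ u : ℝ,
      0 ≤ Real.exp (-u ^ 2 / 2) * (1 - ((1 + u / Real.sqrt (u ^ 2 + 4)) / 2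
        - u * ((u + Real.sqrt (u ^ 2 + 4)) / 2))) := by
    intro u
    set s := Real.sqrt (u ^ 2 + 4) with hs
    have hs_pos := hsqrt_pos u
    have hs_sq := hsqrt_sq u
    refine mul_nonneg (Real.exp_pos _).le ?_
    rw [sub_nonneg]
    have key : s * (1 + u ^ 2) + u * (u ^ 2 + 3) ≥ 0 := by
      have h4 : (s * (1 + u ^ 2)) ^ 2 - (u * (u ^ 2 + 3)) ^ 2 = 4 := by nlinarith [hs_sq]
      nlinarith [mul_pos hs_pos (by positivity : (0:ℝ) < 1 + u ^ 2)]
    have expand : (1 + u / s) / 2 - u * ((u + s) / 2)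
        = 1 - (s + u ^ 2 * s + u ^ 3 + 3 * u) / (2 * s) := by
      have hs2 : s ^ 2 = u ^ 2 + 4 := hs_sq
      have hs0 : s ≠ 0 := hs_pos.ne'
      field_simp
      linear_combination (-u) * hs2
    rw [expand]
    have h5 : 0 ≤ (s + u ^ 2 * s + u ^ 3 + 3 * u) / (2 * s) :=
      div_nonneg (by nlinarith [key]) (by positivity)
    linarith
  have hDmono : Monotone D := by
    refine monotone_of_deriv_nonneg (fun u => (hDderiv u).differentiableAt) ?_
    intro u
    rw [(hDderiv u).deriv]
    exact hderiv_nonneg u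
  -- D tends to 0 at -infty
  have htend : Tendsto D atBot (𝓝 0) := by
    have h1 : Tendsto Psi atBot (𝓝 0) := by
      have hub : ∀ᶠ u : ℝ in atBot, Psi u ≤ 1 / (-u) := by
        filter_upwards [Iic_mem_atBot (-1 : ℝ)] with u hu
        simp only [Set.mem_Iic] at hu
        have hu0 : u < 0 := by linarith
        refine le_trans (Psi_lt hu0).le ?_
        apply div_le_div_of_nonneg_right ?_ (by linarith)
        · exact Real.exp_le_one_iff.2 (by nlinarith [sq_nonneg u])
      have hlb : ∀ᶠ u : ℝ in atBot, 0 ≤ Psi u := by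
        filter_upwards with u using (Psi_pos u).le
      have hz : Tendsto (fun u : ℝ => 1 / (-u)) atBot (𝓝 0) := by
        have := tendsto_inv_atTop_zero.comp (tendsto_neg_atBot_atTop : Tendsto (fun u : ℝ => -u) atBot atTop)
        refine this.congr ?_
        intro u; simp [one_div]
      exact tendsto_of_tendsto_of_tendsto_of_le_of_le' tendsto_const_nhds hz hlb hub
    have h2 : Tendsto (fun u : ℝ => Real.exp (-u ^ 2 / 2) * ((u + Real.sqrt (u ^ 2 + 4)) / 2))
        atBot (𝓝 0) := by
      have hub : ∀ᶠ u : ℝ in atBot, Real.exp (-u ^ 2 / 2) * ((u + Real.sqrt (u ^ 2 + 4)) / 2)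
          ≤ 1 / (-u) := by
        filter_upwards [Iic_mem_atBot (-1 : ℝ)] with u hu
        simp only [Set.mem_Iic] at hu
        have hu0 : u < 0 := by linarith
        have hh_pos : 0 < (u + Real.sqrt (u ^ 2 + 4)) / 2 := by
          have := hsqrt_gt u; linarith
        have hexp1 : Real.exp (-u ^ 2 / 2) ≤ 1 :=
          Real.exp_le_one_iff.2 (by nlinarith [sq_nonneg u])
        refine le_trans (mul_le_of_le_one_left hh_pos.le hexp1) ?_
        -- (u + √(u²+4))/2 ≤ 1/(-u):  (u+s)(-u) ≤ 2  ⟺ -u² - u s ≤ 2 ⟺ -us ≤ 2 + u²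
        rw [div_le_div_iff₀ (by norm_num) (by linarith)]
        have hs_sq := hsqrt_sq u
        have hs_pos := hsqrt_pos u
        nlinarith [hs_sq, hs_pos, sq_nonneg (u * Real.sqrt (u ^ 2 + 4) + u ^ 2 + 2)]
      have hlb : ∀ᶠ u : ℝ in atBot,
          0 ≤ Real.exp (-u ^ 2 / 2) * ((u + Real.sqrt (u ^ 2 + 4)) / 2) := by
        filter_upwards with u
        exact mul_nonneg (Real.exp_pos _).le
          (div_nonneg (by linarith [hsqrt_gt u]) (by norm_num))
      have hz : Tendsto (fun u : ℝ => 1 / (-u)) atBot (𝓝 0) := by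
        have := tendsto_inv_atTop_zero.comp (tendsto_neg_atBot_atTop : Tendsto (fun u : ℝ => -u) atBot atTop)
        refine this.congr ?_
        intro u; simp [one_div]
      exact tendsto_of_tendsto_of_tendsto_of_le_of_le' tendsto_const_nhds hz hlb hub
    have := h1.sub h2
    simpa using this
  -- conclude D t ≥ 0
  have hDnonneg : 0 ≤ D t := by
    refine le_of_tendsto htend ?_
    filter_upwards [Iic_mem_atBot t] with u hu
    exact hDmono hu
  -- translate into psi bound
  have hexp_pos := Real.exp_pos (t ^ 2 / 2)
  have : Real.exp (-t ^ 2 / 2) * ((t + Real.sqrt (t ^ 2 + 4)) / 2) ≤ Psi t := by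
    simpa [hD, sub_nonneg] using hDnonneg
  have h2 := mul_le_mul_of_nonneg_left this hexp_pos.le
  rw [← mul_assoc, ← Real.exp_add] at h2
  simp only [show t ^ 2 / 2 + -t ^ 2 / 2 = 0 by ring, Real.exp_zero, one_mul] at h2
  exact le_trans (le_of_eq rfl) h2

/-- pointwise log-convexity of psi: `(ψ')² ≤ ψ·ψ''` where ψ' = tψ+1, ψ'' = ψ + t·ψ'. -/
lemma psi_logconv (t : ℝ) :
    (t * psi t + 1) ^ 2 ≤ psi t * (psi t + t * (t * psi t + 1)) := by
  have hml := mills_lower t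
  have hs_sq : Real.sqrt (t ^ 2 + 4) ^ 2 = t ^ 2 + 4 := Real.sq_sqrt (by positivity)
  have hs_pos : 0 < Real.sqrt (t ^ 2 + 4) := Real.sqrt_pos.2 (by positivity)
  -- need ψ² - tψ - 1 ≥ 0; since ψ ≥ (t+√(t²+4))/2 = larger root
  nlinarith [psi_pos t, hml, hs_sq, hs_pos]


lemma psi_cont : Continuous psi := by
  unfold psi; exact (Real.continuous_exp.comp (by continuity)).mul Psi_cont

noncomputable def Kfun (V_R V_F x : ℝ) : ℝ := ∫ t in (V_R - x)..(V_F - x), psi t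

/-- translation identity for the Gaussian CDF integral -/
lemma Psi_translate (w x : ℝ) :
    ∫ v in Set.Iic w, Real.exp (-(v - x) ^ 2 / 2) = Psi (w - x) := by
  have h1 : ∫ v in Set.Iic w, Real.exp (-(v - x) ^ 2 / 2)
      = ∫ v, Set.indicator (Set.Iic (w - x)) (fun s => Real.exp (-s ^ 2 / 2)) (v - x) := by
    rw [← integral_indicator measurableSet_Iic]
    congr 1
    funext v
    by_cases h : v ≤ w
    · rw [Set.indicator_of_mem (by simpa using h),
        Set.indicator_of_mem (by simp; linarith)]
    · rw [Set.indicator_of_notMem (by simpa using h),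
        Set.indicator_of_notMem (by simp; linarith)]
  rw [h1, integral_sub_right_eq_self _ x, integral_indicator measurableSet_Iic, Psi_def]

/-- The Fubini identity: `Ifun V_R V_F b N = Kfun V_R V_F (b*N)`. -/
lemma Ifun_eq (V_R V_F : ℝ) (hV : V_R < V_F) (b N : ℝ) :
    Ifun V_R V_F b N = Kfun V_R V_F (b * N) := by
  set x := b * N with hx
  set f : ℝ → ℝ → ℝ := fun v w =>
    Set.indicator {p : ℝ × ℝ | p.1 < p.2}
      (fun p => Real.exp (-(p.1 - x) ^ 2 / 2) * Real.exp ((p.2 - x) ^ 2 / 2)) (v, w) with hf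
  have hmeas_s : MeasurableSet {p : ℝ × ℝ | p.1 < p.2} :=
    measurableSet_lt measurable_fst measurable_snd
  have hcont2 : Continuous (fun w : ℝ => Real.exp ((w - x) ^ 2 / 2)) := by continuity
  have hcont1 : Continuous (fun v : ℝ => Real.exp (-(v - x) ^ 2 / 2)) := by continuity
  -- integrability on the product
  have hint : Integrable (Function.uncurry f)
      ((volume.restrict (Set.Iic V_F)).prod (volume.restrict (Set.Ioc V_R V_F))) := by
    have h1 : Integrable (fun v : ℝ => Real.exp (-(v - x) ^ 2 / 2))
        (volume.restrict (Set.Iic V_F)) := by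
      have := gauss_integrable.comp_sub_right x
      exact this.integrableOn
    have h2 : Integrable (fun w : ℝ => Real.exp ((w - x) ^ 2 / 2))
        (volume.restrict (Set.Ioc V_R V_F)) := hcont2.integrableOn_Ioc
    have h3 := h1.mul_prod h2
    have h4 := h3.indicator (s := {p : ℝ × ℝ | p.1 < p.2}) hmeas_s
    refine h4.congr ?_
    filter_upwards with p
    rw [hf]
    simp only [Function.uncurry]
  -- step A: rewrite inner interval integral as set integral of f
  have stepA : ∀ v ∈ Set.Iic V_F,
      Real.exp (-(v - x) ^ 2 / 2) * (∫ w in (max v V_R)..V_F, Real.exp ((w - x) ^ 2 / 2))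
        = ∫ w in Set.Ioc V_R V_F, f v w := by
    intro v hv
    simp only [Set.mem_Iic] at hv
    have hmax : max v V_R ≤ V_F := max_le hv hV.le
    rw [intervalIntegral.integral_of_le hmax]
    have hind : ∀ w, f v w
        = Set.indicator (Set.Ioi v)
            (fun w => Real.exp (-(v - x) ^ 2 / 2) * Real.exp ((w - x) ^ 2 / 2)) w := by
      intro w
      simp only [hf, Set.indicator_apply, Set.mem_setOf_eq, Set.mem_Ioi]
    rw [setIntegral_congr_fun measurableSet_Ioc (fun w _ => hind w),
      setIntegral_indicator measurableSet_Ioi, Set.Ioc_inter_Ioi,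
      show V_R ⊔ v = max v V_R from sup_comm V_R v, integral_const_mul]
  -- step C: the inner integral after swapping
  have stepC : ∀ w ∈ Set.Ioc V_R V_F,
      (∫ v in Set.Iic V_F, f v w) = psi (w - x) := by
    intro w hw
    simp only [Set.mem_Ioc] at hw
    have hind : ∀ v, f v w
        = Set.indicator (Set.Iio w)
            (fun v => Real.exp (-(v - x) ^ 2 / 2) * Real.exp ((w - x) ^ 2 / 2)) v := by
      intro v
      simp only [hf, Set.indicator_apply, Set.mem_setOf_eq, Set.mem_Iio]
    rw [setIntegral_congr_fun measurableSet_Iic (fun v _ => hind v),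
      setIntegral_indicator measurableSet_Iio]
    have hset : Set.Iic V_F ∩ Set.Iio w = Set.Iio w := by
      rw [Set.inter_eq_self_of_subset_right]
      intro v hv
      simp only [Set.mem_Iio] at hv
      simp only [Set.mem_Iic]
      linarith [hw.2]
    rw [hset]
    have h1 : ∫ v in Set.Iio w, Real.exp (-(v - x) ^ 2 / 2) * Real.exp ((w - x) ^ 2 / 2)
        = (∫ v in Set.Iio w, Real.exp (-(v - x) ^ 2 / 2)) * Real.exp ((w - x) ^ 2 / 2) := by
      rw [integral_mul_const]
    rw [h1, ← integral_Iic_eq_integral_Iio, Psi_translate, psi]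
    ring
  -- assemble
  have main : Ifun V_R V_F b N = ∫ w in Set.Ioc V_R V_F, psi (w - x) := by
    rw [Ifun]
    rw [setIntegral_congr_fun measurableSet_Iic stepA]
    rw [integral_integral_swap hint]
    exact setIntegral_congr_fun measurableSet_Ioc stepC
  rw [main, ← intervalIntegral.integral_of_le hV.le, Kfun,
    ← intervalIntegral.integral_comp_sub_right _ x]


noncomputable def psid (t : ℝ) : ℝ := t * psi t + 1
noncomputable def Kd (V_R V_F x : ℝ) : ℝ := psi (V_R - x) - psi (V_F - x)
noncomputable def Kdd (V_R V_F x : ℝ) : ℝ := psid (V_F - x) - psid (V_R - x)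

lemma psid_cont : Continuous psid := by
  unfold psid; exact (continuous_id.mul psi_cont).add continuous_const

lemma hasDerivAt_psid (t : ℝ) : HasDerivAt psid (psi t + t * psid t) t := by
  have h1 := (hasDerivAt_id t).mul (hasDerivAt_psi t)
  have h2 := h1.add_const 1
  unfold psid
  refine h2.congr_deriv ?_
  simp only [id_eq]
  ring

lemma hasDerivAt_Kfun (V_R V_F x : ℝ) :
    HasDerivAt (Kfun V_R V_F) (Kd V_R V_F x) x := by
  have hF : ∀ u : ℝ, HasDerivAt (fun u => ∫ t in (0:ℝ)..u, psi t) (psi u) u := by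
    intro u
    exact intervalIntegral.integral_hasDerivAt_right (psi_cont.intervalIntegrable _ _)
      (psi_cont.stronglyMeasurableAtFilter _ _) psi_cont.continuousAt
  have hsub1 : HasDerivAt (fun x : ℝ => V_F - x) (-1) x := by
    simpa using (hasDerivAt_id x).const_sub V_F
  have hsub2 : HasDerivAt (fun x : ℝ => V_R - x) (-1) x := by
    simpa using (hasDerivAt_id x).const_sub V_R
  have h1 := (hF (V_F - x)).comp x hsub1
  have h2 := (hF (V_R - x)).comp x hsub2
  have h3 := h1.sub h2
  have hkey : ∀ y : ℝ, Kfun V_R V_F y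
      = (∫ t in (0:ℝ)..(V_F - y), psi t) - ∫ t in (0:ℝ)..(V_R - y), psi t := by
    intro y
    rw [Kfun, intervalIntegral.integral_interval_sub_left (psi_cont.intervalIntegrable _ _)
      (psi_cont.intervalIntegrable _ _)]
  have h4 : HasDerivAt (Kfun V_R V_F) (psi (V_F - x) * (-1) - psi (V_R - x) * (-1)) x := by
    refine h3.congr_of_eventuallyEq ?_
    filter_upwards with y using (hkey y)
  convert h4 using 1
  rw [Kd]; ring

lemma hasDerivAt_Kd (V_R V_F x : ℝ) :
    HasDerivAt (Kd V_R V_F) (Kdd V_R V_F x) x := by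
  have hsub1 : HasDerivAt (fun x : ℝ => V_F - x) (-1) x := by
    simpa using (hasDerivAt_id x).const_sub V_F
  have hsub2 : HasDerivAt (fun x : ℝ => V_R - x) (-1) x := by
    simpa using (hasDerivAt_id x).const_sub V_R
  have h1 := (hasDerivAt_psi (V_R - x)).comp x hsub2
  have h2 := (hasDerivAt_psi (V_F - x)).comp x hsub1
  have h3 := h1.sub h2
  have : HasDerivAt (Kd V_R V_F)
      (((V_R - x) * psi (V_R - x) + 1) * (-1) - ((V_F - x) * psi (V_F - x) + 1) * (-1)) x := h3
  convert this using 1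
  rw [Kdd, psid, psid]; ring

lemma Kfun_pos (V_R V_F : ℝ) (hV : V_R < V_F) (x : ℝ) : 0 < Kfun V_R V_F x := by
  rw [Kfun]
  exact intervalIntegral.intervalIntegral_pos_of_pos_on (psi_cont.intervalIntegrable _ _)
    (fun t _ => psi_pos t) (by linarith)

lemma Kd_neg (V_R V_F : ℝ) (hV : V_R < V_F) (x : ℝ) : Kd V_R V_F x < 0 := by
  rw [Kd, sub_neg]
  exact psi_strictMono (by linarith)

/-- log-convexity of `Kfun`: `Kd² ≤ Kfun · Kdd`. -/
lemma K_logconv (V_R V_F : ℝ) (hV : V_R < V_F) (x : ℝ) :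
    Kd V_R V_F x ^ 2 ≤ Kfun V_R V_F x * Kdd V_R V_F x := by
  set a := V_R - x with ha
  set c := V_F - x with hc
  have hac : a ≤ c := by rw [ha, hc]; linarith
  set A := ∫ t in a..c, psi t with hA
  set B := ∫ t in a..c, psid t with hB
  have hA_pos : 0 < A := Kfun_pos V_R V_F hV x
  -- FTC identities
  have hBftc : B = psi c - psi a :=
    intervalIntegral.integral_eq_sub_of_hasDerivAt
      (fun t _ => by simpa [psid] using hasDerivAt_psi t)
      (psid_cont.intervalIntegrable _ _)
  have hCftc : (∫ t in a..c, (psi t + t * psid t)) = psid c - psid a :=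
    intervalIntegral.integral_eq_sub_of_hasDerivAt
      (fun t _ => hasDerivAt_psid t)
      ((psi_cont.add (continuous_id.mul psid_cont)).intervalIntegrable _ _)
  have hKd : Kd V_R V_F x = -B := by rw [Kd, hBftc]; ring
  have hKdd : Kdd V_R V_F x = ∫ t in a..c, (psi t + t * psid t) := by
    rw [Kdd, hCftc]
  -- continuity facts
  have hcont_q : Continuous (fun t => psid t ^ 2 / psi t) :=
    (psid_cont.pow 2).div psi_cont (fun t => (psi_pos t).ne')
  -- step 1 : ∫ ψd²/ψ ≤ ∫ ψdd
  have step1 : (∫ t in a..c, psid t ^ 2 / psi t) ≤ ∫ t in a..c, (psi t + t * psid t) := by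
    refine intervalIntegral.integral_mono_on hac (hcont_q.intervalIntegrable _ _)
      ((psi_cont.add (continuous_id.mul psid_cont)).intervalIntegrable _ _) ?_
    intro t _
    rw [div_le_iff₀ (psi_pos t)]
    have := psi_logconv t
    rw [psid]
    nlinarith [this]
  -- step 2 : B² ≤ A * ∫ ψd²/ψ
  have step2 : B ^ 2 ≤ A * ∫ t in a..c, psid t ^ 2 / psi t := by
    have hnn : 0 ≤ ∫ t in a..c, (B * psi t - A * psid t) ^ 2 / psi t := by
      refine intervalIntegral.integral_nonneg hac ?_
      intro t _
      exact div_nonneg (sq_nonneg _) (psi_pos t).le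
    have hexpand : (∫ t in a..c, (B * psi t - A * psid t) ^ 2 / psi t)
        = B ^ 2 * A - 2 * A * B * B + A ^ 2 * ∫ t in a..c, psid t ^ 2 / psi t := by
      have hptw : ∀ t, (B * psi t - A * psid t) ^ 2 / psi t
          = B ^ 2 * psi t - 2 * A * B * psid t + A ^ 2 * (psid t ^ 2 / psi t) := by
        intro t
        have hψ := (psi_pos t).ne'
        field_simp
        ring
      rw [intervalIntegral.integral_congr (g :=
        fun t => B ^ 2 * psi t - 2 * A * B * psid t + A ^ 2 * (psid t ^ 2 / psi t))
        (fun t _ => hptw t)]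
      rw [intervalIntegral.integral_add (f := fun t => B ^ 2 * psi t - 2 * A * B * psid t)
        (g := fun t => A ^ 2 * (psid t ^ 2 / psi t))
        ((((continuous_const.mul psi_cont)).sub ((continuous_const.mul psid_cont))).intervalIntegrable _ _)
        (((continuous_const.mul hcont_q)).intervalIntegrable _ _),
        intervalIntegral.integral_sub (f := fun t => B ^ 2 * psi t) (g := fun t => 2 * A * B * psid t)
        (((continuous_const.mul psi_cont)).intervalIntegrable _ _)
        (((continuous_const.mul psid_cont)).intervalIntegrable _ _),
        intervalIntegral.integral_const_mul, intervalIntegral.integral_const_mul,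
        intervalIntegral.integral_const_mul]
      try ring
    rw [hexpand] at hnn
    nlinarith [hA_pos]
  have step3 : (∫ t in a..c, psid t ^ 2 / psi t) ≤ Kdd V_R V_F x := by
    rw [hKdd]; exact step1
  calc Kd V_R V_F x ^ 2 = B ^ 2 := by rw [hKd]; ring
    _ ≤ A * ∫ t in a..c, psid t ^ 2 / psi t := step2
    _ ≤ A * Kdd V_R V_F x := by
        refine mul_le_mul_of_nonneg_left step3 hA_pos.le
    _ = Kfun V_R V_F x * Kdd V_R V_F x := rfl

lemma Kfun_cont (V_R V_F : ℝ) : Continuous (Kfun V_R V_F) := by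
  have h : Differentiable ℝ (Kfun V_R V_F) :=
    fun x => (hasDerivAt_Kfun V_R V_F x).differentiableAt
  exact h.continuous

lemma xK_strictMonoOn (V_R V_F : ℝ) (hV : V_R < V_F) :
    StrictMonoOn (fun x => x * Kfun V_R V_F x) (Set.Iic 0) := by
  refine strictMonoOn_of_deriv_pos (convex_Iic 0)
    ((continuous_id.mul (Kfun_cont V_R V_F)).continuousOn) ?_
  intro x hx
  rw [interior_Iic] at hx
  simp only [Set.mem_Iio] at hx
  have hd : HasDerivAt (fun x => x * Kfun V_R V_F x)
      (1 * Kfun V_R V_F x + x * Kd V_R V_F x) x :=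
    (hasDerivAt_id x).mul (hasDerivAt_Kfun V_R V_F x)
  rw [hd.deriv]
  have h1 := Kfun_pos V_R V_F hV x
  have h2 := Kd_neg V_R V_F hV x
  nlinarith

noncomputable def Gfun (V_R V_F x : ℝ) : ℝ := -x * Kd V_R V_F x / Kfun V_R V_F x

lemma hasDerivAt_Gfun (V_R V_F : ℝ) (hV : V_R < V_F) (x : ℝ) :
    HasDerivAt (Gfun V_R V_F)
      (((-Kd V_R V_F x + -x * Kdd V_R V_F x) * Kfun V_R V_F x
        - (-x * Kd V_R V_F x) * Kd V_R V_F x) / Kfun V_R V_F x ^ 2) x := by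
  have hu : HasDerivAt (fun x => -x * Kd V_R V_F x)
      (-Kd V_R V_F x + -x * Kdd V_R V_F x) x := by
    have := ((hasDerivAt_id x).neg).mul (hasDerivAt_Kd V_R V_F x)
    refine this.congr_deriv ?_
    try simp only [id_eq, neg_mul, one_mul, Pi.neg_apply]
    try ring
  have hdiv := hu.div (hasDerivAt_Kfun V_R V_F x) (Kfun_pos V_R V_F hV x).ne'
  exact hdiv

lemma G_strictMonoOn (V_R V_F : ℝ) (hV : V_R < V_F) :
    StrictMonoOn (Gfun V_R V_F) (Set.Iic 0) := by
  refine strictMonoOn_of_deriv_pos (convex_Iic 0) ?_ ?_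
  · exact (fun x _ => ((hasDerivAt_Gfun V_R V_F hV x).differentiableAt.continuousAt).continuousWithinAt)
  · intro x hx
    rw [interior_Iic] at hx
    simp only [Set.mem_Iio] at hx
    rw [(hasDerivAt_Gfun V_R V_F hV x).deriv]
    have hK := Kfun_pos V_R V_F hV x
    have hKd := Kd_neg V_R V_F hV x
    have hlc := K_logconv V_R V_F hV x
    have hnum : 0 < (-Kd V_R V_F x + -x * Kdd V_R V_F x) * Kfun V_R V_F x
        - (-x * Kd V_R V_F x) * Kd V_R V_F x := by nlinarith
    positivity

lemma hasDerivAt_Ifun (V_R V_F : ℝ) (hV : V_R < V_F) (b N : ℝ) :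
    HasDerivAt (fun N => Ifun V_R V_F b N) (b * Kd V_R V_F (b * N)) N := by
  have h1 : HasDerivAt (fun N : ℝ => b * N) b N := by
    simpa using (hasDerivAt_id N).const_mul b
  have h2 := (hasDerivAt_Kfun V_R V_F (b * N)).comp N h1
  have h3 : HasDerivAt (fun N => Kfun V_R V_F (b * N)) (b * Kd V_R V_F (b * N)) N := by
    exact h2.congr_deriv (by ring)
  refine h3.congr_of_eventuallyEq ?_
  filter_upwards with M using (Ifun_eq V_R V_F hV b M)

/-- Lemma A.1: with `N(b)` the unique positive solution of `N·I(b,N) = 1` for `b ≤ 0`, the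
function `g(b) = −∂_N I(b,N(b)) / I(b,N(b))²` (which equals the derivative of
`N ↦ 1/I(b,N)` at `N(b)`) is strictly increasing on `(−∞, 0]`. -/
theorem g_strictMonoOn (V_R V_F : ℝ) (hV : V_R < V_F)
    (Nb : ℝ → ℝ)
    (hNb : ∀ b : ℝ, b ≤ 0 →
      0 < Nb b ∧ Nb b * Ifun V_R V_F b (Nb b) = 1 ∧
      ∀ N : ℝ, 0 < N → N * Ifun V_R V_F b N = 1 → N = Nb b) :
    (∀ b : ℝ, b ≤ 0 →
      -(deriv (fun N => Ifun V_R V_F b N) (Nb b)) / (Ifun V_R V_F b (Nb b)) ^ 2 =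
        deriv (fun N => 1 / Ifun V_R V_F b N) (Nb b)) ∧
    StrictMonoOn
      (fun b => -(deriv (fun N => Ifun V_R V_F b N) (Nb b)) / (Ifun V_R V_F b (Nb b)) ^ 2)
      (Set.Iic 0) := by
  -- generic facts
  have hIK : ∀ b N : ℝ, Ifun V_R V_F b N = Kfun V_R V_F (b * N) := fun b N =>
    Ifun_eq V_R V_F hV b N
  have hderivI : ∀ b N : ℝ, deriv (fun N => Ifun V_R V_F b N) N = b * Kd V_R V_F (b * N) :=
    fun b N => (hasDerivAt_Ifun V_R V_F hV b N).deriv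
  constructor
  · intro b _
    have hKpos := Kfun_pos V_R V_F hV (b * Nb b)
    have hd : HasDerivAt (fun N => 1 / Ifun V_R V_F b N)
        ((0 * Kfun V_R V_F (b * Nb b) - 1 * (b * Kd V_R V_F (b * Nb b)))
          / Kfun V_R V_F (b * Nb b) ^ 2) (Nb b) := by
      have := (hasDerivAt_const (Nb b) (1:ℝ)).div (hasDerivAt_Ifun V_R V_F hV b (Nb b))
        (by rw [hIK]; exact hKpos.ne')
      rw [hIK b (Nb b)] at this
      exact this
    rw [hd.deriv, hderivI, hIK]
    ring
  · -- the function agrees with Gfun (b * Nb b)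
    have hfun : ∀ b : ℝ, b ≤ 0 →
        -(deriv (fun N => Ifun V_R V_F b N) (Nb b)) / (Ifun V_R V_F b (Nb b)) ^ 2
          = Gfun V_R V_F (b * Nb b) := by
      intro b hb
      obtain ⟨hNpos, hsol, -⟩ := hNb b hb
      have hKpos := Kfun_pos V_R V_F hV (b * Nb b)
      have hbK : (b * Nb b) * Kfun V_R V_F (b * Nb b) = b := by
        have h0 : b * (Nb b * Ifun V_R V_F b (Nb b)) = b * 1 := by rw [hsol]
        rw [hIK b (Nb b)] at h0
        calc (b * Nb b) * Kfun V_R V_F (b * Nb b)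
            = b * (Nb b * Kfun V_R V_F (b * Nb b)) := by ring
          _ = b := by rw [h0]; ring
      rw [hderivI, hIK, Gfun,
        div_eq_div_iff (pow_ne_zero 2 hKpos.ne') hKpos.ne']
      linear_combination (Kd V_R V_F (b * Nb b) * Kfun V_R V_F (b * Nb b)) * hbK
    intro b1 hb1 b2 hb2 hlt
    simp only [Set.mem_Iic] at hb1 hb2
    dsimp only
    rw [hfun b1 hb1, hfun b2 hb2]
    obtain ⟨hN1, hs1, -⟩ := hNb b1 hb1
    obtain ⟨hN2, hs2, -⟩ := hNb b2 hb2
    have hx1 : b1 * Nb b1 ≤ 0 := mul_nonpos_of_nonpos_of_nonneg hb1 hN1.le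
    have hx2 : b2 * Nb b2 ≤ 0 := mul_nonpos_of_nonpos_of_nonneg hb2 hN2.le
    have hbK : ∀ b : ℝ, (hb : b ≤ 0) → (b * Nb b) * Kfun V_R V_F (b * Nb b) = b := by
      intro b hb
      obtain ⟨hNpos, hsol, -⟩ := hNb b hb
      have : b * (Nb b * Ifun V_R V_F b (Nb b)) = b * 1 := by rw [hsol]
      rw [hIK b (Nb b)] at this
      calc (b * Nb b) * Kfun V_R V_F (b * Nb b)
          = b * (Nb b * Kfun V_R V_F (b * Nb b)) := by ring
        _ = b := by rw [this]; ring
    have hxlt : b1 * Nb b1 < b2 * Nb b2 := by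
      have h12 : (b1 * Nb b1) * Kfun V_R V_F (b1 * Nb b1)
          < (b2 * Nb b2) * Kfun V_R V_F (b2 * Nb b2) := by
        rw [hbK b1 hb1, hbK b2 hb2]; exact hlt
      by_contra hcon
      push_neg at hcon
      rcases eq_or_lt_of_le hcon with heq | hltx
      · rw [heq] at h12; exact lt_irrefl _ h12
      · have h3 := xK_strictMonoOn V_R V_F hV hx2 hx1 hltx
        dsimp only at h3
        linarith
    exact G_strictMonoOn V_R V_F hV hx1 hx2 hxlt
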